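/- Let Γ be a connected elliptic weighted graph which is log canonical and such that every external component is attached to the graph, i.e. for every j ∈ J one has ∑_{i∈I} t_{ji} ≥ 1. Then the sum of the external coefficients satisfies ∑_{j∈J} b_j ≤ 2. -/

import Mathlib

open Finset

/-- A weighted graph: a finite vertex set `Fin n`, genera `g`, a symmetric integer
intersection matrix `M` with nonnegative off-diagonal entries and diagonal entries `≤ -1`
(the weight of vertex `i` is `-M i i`), and an external part consisting of `s` external
components with rational coefficients `0 < b j ≤ 1` and intersection numbers `t j i`. -/
structure WGraph where
  n : ℕ
  npos : 0 < n
  M : Matrix (Fin n) (Fin n) ℤ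
  g : Fin n → ℕ
  s : ℕ
  b : Fin s → ℚ
  t : Fin s → Fin n → ℕ
  symm : ∀ i k, M i k = M k i
  offdiag_nonneg : ∀ i k, i ≠ k → 0 ≤ M i k
  diag_le : ∀ i, M i i ≤ -1
  b_pos : ∀ j, 0 < b j
  b_le_one : ∀ j, b j ≤ 1

namespace WGraph

/-- The external contribution `c_i = ∑_j b_j t_{ji}`. -/
def extc (Γ : WGraph) (i : Fin Γ.n) : ℚ := ∑ j, Γ.b j * (Γ.t j i : ℚ)

/-- `Γ` is elliptic: its intersection matrix is negative definite. -/
def Elliptic (Γ : WGraph) : Prop :=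
  ∀ v : Fin Γ.n → ℝ, v ≠ 0 → ∑ i, ∑ k, v i * (Γ.M i k : ℝ) * v k < 0

/-- `Γ` is minimal: no vertex of genus `0` and weight `1`. -/
def IsMinimal (Γ : WGraph) : Prop := ∀ i, ¬ (Γ.g i = 0 ∧ Γ.M i i = -1)

/-- `Γ` is connected: the graph with an edge `{i,k}` whenever `M i k > 0` is connected. -/
def Connected (Γ : WGraph) : Prop :=
  (SimpleGraph.fromRel (fun i k : Fin Γ.n => 0 < Γ.M i k)).Connected

/-- `a` is the (unique, when `M` is invertible) system of log discrepancies of `Γ`: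
`∑_i a_i M_{ik} = (2 g_k − 2 − M_{kk}) + c_k + ∑_i M_{ik}` for all `k`. -/
def IsDiscr (Γ : WGraph) (a : Fin Γ.n → ℝ) : Prop :=
  ∀ k, ∑ i, a i * (Γ.M i k : ℝ) =
    (2 * (Γ.g k : ℝ) - 2 - (Γ.M k k : ℝ)) + (Γ.extc k : ℝ) + ∑ i, (Γ.M i k : ℝ)

/-- `Γ` is a Du Val graph: all genera `0`, all weights `2`, empty external contribution. -/
def DuVal (Γ : WGraph) : Prop :=
  ∀ i, Γ.g i = 0 ∧ Γ.M i i = -2 ∧ Γ.extc i = 0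

/-- The minimal log discrepancy `pld` of a system of log discrepancies `a`. -/
def pld (Γ : WGraph) (a : Fin Γ.n → ℝ) : ℝ :=
  Finset.univ.inf' ⟨⟨0, Γ.npos⟩, Finset.mem_univ _⟩ a

/-- `Γ'` is a subgraph of `Γ` via the injection `e` of vertex sets:
off-diagonal entries, weights, genera and external contributions of `Γ'` are dominated by
the corresponding ones of `Γ`. -/
def SubgraphVia (Γ' Γ : WGraph) (e : Fin Γ'.n → Fin Γ.n) : Prop :=
  Function.Injective e ∧
  (∀ i k : Fin Γ'.n, i ≠ k → Γ'.M i k ≤ Γ.M (e i) (e k)) ∧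
  (∀ i, Γ.M (e i) (e i) ≤ Γ'.M i i) ∧
  (∀ i, Γ'.g i ≤ Γ.g (e i)) ∧
  (∀ i, Γ'.extc i ≤ Γ.extc (e i))

/-- The subgraph `Γ'` (via `e`) differs from `Γ`. -/
def ProperVia (Γ' Γ : WGraph) (e : Fin Γ'.n → Fin Γ.n) : Prop :=
  ¬ (Function.Surjective e ∧
     (∀ i k : Fin Γ'.n, Γ'.M i k = Γ.M (e i) (e k)) ∧
     (∀ i, Γ'.g i = Γ.g (e i)) ∧
     (∀ i, Γ'.extc i = Γ.extc (e i)))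

end WGraph

/-- Order on coefficient tuples: `B ≤ B'` iff `B` is at least as long as `B'` and
coordinatewise `B j ≤ B' j` on the common indices. -/
def TupleLE {α : Type*} [LE α] {s t : ℕ} (B : Fin s → α) (B' : Fin t → α) : Prop :=
  ∃ h : t ≤ s, ∀ j : Fin t, B (Fin.castLE h j) ≤ B' j

/-- Strict order on coefficient tuples: `B < B'` iff `B ≤ B'` and moreover `B` is strictly
longer or some coordinate inequality is strict. -/
def TupleLT {α : Type*} [Preorder α] {s t : ℕ} (B : Fin s → α) (B' : Fin t → α) : Prop :=
  TupleLE B B' ∧ (t < s ∨ ∃ h : t ≤ s, ∃ j : Fin t, B (Fin.castLE h j) < B' j)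

section Aux

section helpers
variable {ι : Type} [Fintype ι] [DecidableEq ι]

/-- Split off one coordinate from a sum over a fintype. -/
lemma sum_split {α : Type*} [AddCommMonoid α] (e : ι) (f : ι → α) :
    ∑ i, f i = f e + ∑ i : {i : ι // i ≠ e}, f i.1 := by
  rw [← Finset.add_sum_erase _ f (Finset.mem_univ e)]
  congr 1
  exact Finset.sum_subtype (univ.erase e) (fun x => by simp) f

lemma int_mul_pred_nonneg (m : ℤ) : 0 ≤ m * (m - 1) := by
  rcases le_or_gt m 0 with h | h
  · have : 0 ≤ (-m) * (1 - m) := mul_nonneg (by linarith) (by linarith)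
    nlinarith [this]
  · exact mul_nonneg (by linarith) (by omega)

omit [Fintype ι] in
lemma walk_cut {G : SimpleGraph ι} {S : Finset ι} :
    ∀ {x y : ι}, G.Walk x y → x ∈ S → y ∉ S → ∃ i ∈ S, ∃ k, k ∉ S ∧ G.Adj i k := by
  intro x y p
  induction p with
  | nil => intro hx hy; exact absurd hx hy
  | @cons u v w h p ih =>
    intro hx hy
    by_cases hv : v ∈ S
    · exact ih hv hy
    · exact ⟨u, hx, v, hv, h⟩

/-- Connectivity gives the cut property. -/
lemma conn_cut (M : Matrix ι ι ℤ) (hsymm : ∀ i k, M i k = M k i)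
    (hconn : (SimpleGraph.fromRel (fun i k : ι => 0 < M i k)).Connected) :
    ∀ S : Finset ι, S.Nonempty → S ≠ Finset.univ →
      ∃ i ∈ S, ∃ k, k ∉ S ∧ 0 < M i k := by
  intro S hS hSu
  obtain ⟨s, hs⟩ := hS
  have : ∃ t, t ∉ S := by
    by_contra h
    push_neg at h
    exact hSu (Finset.eq_univ_iff_forall.2 h)
  obtain ⟨t, ht⟩ := this
  obtain ⟨p⟩ := hconn.preconnected s t
  obtain ⟨i, hi, k, hk, hadj⟩ := walk_cut p hs ht
  rw [SimpleGraph.fromRel_adj] at hadj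
  rcases hadj.2 with h | h
  · exact ⟨i, hi, k, hk, h⟩
  · exact ⟨i, hi, k, hk, by rw [hsymm]; exact h⟩

end helpers


section edge
variable {ι : Type} [Fintype ι] [DecidableEq ι]

lemma edge_bound [Nonempty ι] (M : Matrix ι ι ℤ)
    (hsymm : ∀ i k, M i k = M k i)
    (hoff : ∀ i k, i ≠ k → 0 ≤ M i k)
    (hcut : ∀ S : Finset ι, S.Nonempty → S ≠ Finset.univ →
      ∃ i ∈ S, ∃ k, k ∉ S ∧ 0 < M i k) :
    2 * ((Fintype.card ι : ℤ) - 1) ≤ ∑ p ∈ Finset.univ.offDiag, M p.1 p.2 := by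
  have grow : ∀ j : ℕ, ∃ S : Finset ι, S.Nonempty ∧ (j + 1 ≤ S.card ∨ S = univ) ∧
      2 * ((S.card : ℤ) - 1) ≤ ∑ p ∈ S.offDiag, M p.1 p.2 := by
    intro j
    induction j with
    | zero =>
      obtain ⟨v⟩ := ‹Nonempty ι›
      exact ⟨{v}, ⟨v, mem_singleton_self v⟩, Or.inl (by simp), by simp⟩
    | succ j ih =>
      obtain ⟨S, hSne, hScard, hSsum⟩ := ih
      by_cases hSu : S = univ
      · exact ⟨S, hSne, Or.inr hSu, hSsum⟩
      · obtain ⟨i, hiS, k, hkS, hM⟩ := hcut S hSne hSu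
        refine ⟨insert k S, ⟨i, mem_insert_of_mem hiS⟩, ?_, ?_⟩
        · left
          rw [card_insert_of_notMem hkS]
          rcases hScard with h | h
          · omega
          · exact absurd h hSu
        · rw [card_insert_of_notMem hkS, Finset.offDiag_insert (a := k) hkS]
          have hd1 : Disjoint (S.offDiag ∪ {k} ×ˢ S) (S ×ˢ {k}) := by
            simp only [disjoint_left, mem_union, mem_offDiag, mem_product, mem_singleton]
            rintro ⟨a, b⟩ hab ⟨haS, hbk⟩
            rcases hab with ⟨_, hb, _⟩ | ⟨hak, _⟩
            · exact hkS (hbk ▸ hb)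
            · exact hkS (hak ▸ haS)
          have hd2 : Disjoint S.offDiag ({k} ×ˢ S) := by
            simp only [disjoint_left, mem_offDiag, mem_product, mem_singleton]
            rintro ⟨a, b⟩ ⟨ha, _, _⟩ ⟨hak, _⟩
            exact hkS (hak ▸ ha)
          rw [sum_union hd1, sum_union hd2]
          have h1 : (0:ℤ) + 1 ≤ ∑ p ∈ {k} ×ˢ S, M p.1 p.2 := by
            rw [sum_product]
            simp only [sum_singleton]
            have : ∀ b ∈ S, b ≠ i → (0:ℤ) ≤ M k b :=
              fun b hb _ => hoff k b (fun h => hkS (h ▸ hb))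
            calc (0:ℤ) + 1 ≤ M k i := by
                  rw [hsymm k i]; omega
              _ ≤ ∑ b ∈ S, M k b := Finset.single_le_sum
                  (fun b hb => hoff k b (fun h => hkS (h ▸ hb))) hiS
          have h2 : (0:ℤ) + 1 ≤ ∑ p ∈ S ×ˢ {k}, M p.1 p.2 := by
            rw [sum_product]
            simp only [sum_singleton]
            calc (0:ℤ) + 1 ≤ M i k := by omega
              _ ≤ ∑ b ∈ S, M b k := Finset.single_le_sum
                  (fun b hb => hoff b k (fun h => hkS (h ▸ hb))) hiS
          push_cast
          linarith
  obtain ⟨S, hSne, hScard, hSsum⟩ := grow (Fintype.card ι - 1)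
  have hSu : S = univ := by
    rcases hScard with h | h
    · have h2 : Fintype.card ι ≤ S.card := by
        have := Fintype.card_pos (α := ι); omega
      exact Finset.eq_univ_of_card S (le_antisymm (Finset.card_le_univ S) h2)
    · exact h
  rw [hSu] at hSsum
  rwa [Finset.card_univ] at hSsum

end edge


section key
set_option maxHeartbeats 1000000
variable {ι : Type}
lemma key (N : ℕ) : ∀ {ι : Type} [Fintype ι] [DecidableEq ι] [Nonempty ι]
    (M : Matrix ι ι ℤ) (g : ι → ℕ) (a c : ι → ℝ),
    Fintype.card ι ≤ N →
    (∀ i k, M i k = M k i) →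
    (∀ i k, i ≠ k → 0 ≤ M i k) →
    (∀ i, M i i ≤ -1) →
    (∀ v : ι → ℝ, v ≠ 0 → ∑ i, ∑ k, v i * (M i k : ℝ) * v k < 0) →
    (∀ S : Finset ι, S.Nonempty → S ≠ Finset.univ → ∃ i ∈ S, ∃ k, k ∉ S ∧ 0 < M i k) →
    (∀ i, 0 ≤ a i) →
    (∀ k, c k = (∑ i, a i * (M i k : ℝ)) - (2 * (g k : ℝ) - 2 - (M k k : ℝ))
        - ∑ i, (M i k : ℝ)) →
    (∀ k, 0 ≤ c k) →
    ∑ k, c k ≤ 2 := by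
  induction N with
  | zero =>
    intro ι _ _ _ M g a c hcard _ _ _ _ _ _ _ _
    have := Fintype.card_pos (α := ι)
    omega
  | succ N IH =>
    intro ι instF instD instN M g a c hcard hsymm hoff hdiag hneg hcut ha hc hc0
    by_cases hA : ∀ k, M k k ≤ -2 ∨ 1 ≤ g k
    · -- CASE A: every vertex has weight ≥ 2 or genus ≥ 1
      have hstep1 : ∑ k, c k ≤ ∑ k, (1 + a k) * c k := by
        refine Finset.sum_le_sum fun k _ => ?_
        nlinarith [ha k, hc0 k]
      have hswap : ∑ k, (∑ i, a i * (M i k : ℝ)) = ∑ k, a k * ∑ i, (M i k : ℝ) := by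
        rw [Finset.sum_comm]
        refine Finset.sum_congr rfl fun i _ => ?_
        rw [← Finset.mul_sum]
        congr 1
        exact Finset.sum_congr rfl fun k _ => by rw [hsymm]
      have hA2 : (∑ k, a k * ∑ i, a i * (M i k : ℝ)) ≤ 0 := by
        by_cases haz : a = 0
        · simp [haz]
        · have h := hneg a haz
          have heq : ∑ k, a k * ∑ i, a i * (M i k : ℝ)
              = ∑ i, ∑ k, a i * (M i k : ℝ) * a k := by
            rw [Finset.sum_comm]
            refine Finset.sum_congr rfl fun k _ => ?_
            rw [Finset.mul_sum]
            exact Finset.sum_congr rfl fun i _ => by ring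
          rw [heq]
          exact le_of_lt h
      have hident : ∑ k, (1 + a k) * c k
          = (∑ k, a k * ∑ i, a i * (M i k : ℝ))
            + ∑ k, (1 + a k) * (2 - 2 * (g k : ℝ) + (M k k : ℝ))
            - ∑ k, ∑ i, (M i k : ℝ) := by
        have hpt : ∀ k, (1 + a k) * c k
            = ((1 + a k) * (∑ i, a i * (M i k : ℝ)) - (1 + a k) * (∑ i, (M i k : ℝ)))
              + (1 + a k) * (2 - 2 * (g k : ℝ) + (M k k : ℝ)) := by
          intro k; rw [hc k]; ring
        rw [Finset.sum_congr rfl fun k _ => hpt k, Finset.sum_add_distrib]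
        have : ∑ k, ((1 + a k) * (∑ i, a i * (M i k : ℝ))
              - (1 + a k) * (∑ i, (M i k : ℝ)))
            = (∑ k, a k * ∑ i, a i * (M i k : ℝ))
              + ((∑ k, (∑ i, a i * (M i k : ℝ))) - ∑ k, a k * ∑ i, (M i k : ℝ))
              - ∑ k, ∑ i, (M i k : ℝ) := by
          rw [Finset.sum_sub_distrib]
          have e1 : ∑ k, (1 + a k) * (∑ i, a i * (M i k : ℝ))
              = ∑ k, (∑ i, a i * (M i k : ℝ)) + ∑ k, a k * (∑ i, a i * (M i k : ℝ)) := by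
            rw [← Finset.sum_add_distrib]
            exact Finset.sum_congr rfl fun k _ => by ring
          have e2 : ∑ k, (1 + a k) * (∑ i, (M i k : ℝ))
              = ∑ k, (∑ i, (M i k : ℝ)) + ∑ k, a k * (∑ i, (M i k : ℝ)) := by
            rw [← Finset.sum_add_distrib]
            exact Finset.sum_congr rfl fun k _ => by ring
          rw [e1, e2]; ring
        rw [this, hswap]; ring
      have hterm : ∑ k, (1 + a k) * (2 - 2 * (g k : ℝ) + (M k k : ℝ))
          ≤ ∑ k, (2 - 2 * (g k : ℝ) + (M k k : ℝ)) := by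
        refine Finset.sum_le_sum fun k _ => ?_
        have hfac : (2 : ℝ) - 2 * (g k : ℝ) + (M k k : ℝ) ≤ 0 := by
          rcases hA k with h | h
          · have : ((M k k : ℝ)) ≤ -2 := by exact_mod_cast h
            have : (0:ℝ) ≤ (g k : ℝ) := Nat.cast_nonneg _
            linarith
          · have : (1:ℝ) ≤ (g k : ℝ) := by exact_mod_cast h
            have : ((M k k : ℝ)) ≤ -1 := by exact_mod_cast hdiag k
            linarith
        nlinarith [ha k]
      have hfinal : ∑ k, (2 - 2 * (g k : ℝ) + (M k k : ℝ)) - ∑ k, ∑ i, (M i k : ℝ) ≤ 2 := by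
        have hT := edge_bound M hsymm hoff hcut
        have hTeq : ∑ k, ∑ i, M i k - ∑ k, M k k = ∑ p ∈ Finset.univ.offDiag, M p.1 p.2 := by
          have hprod : ∑ p ∈ (univ ×ˢ univ : Finset (ι × ι)), M p.1 p.2
              = ∑ i, ∑ k, M i k := Finset.sum_product _ _ _
          have hsplit : ∑ p ∈ (univ ×ˢ univ : Finset (ι × ι)), M p.1 p.2
              = ∑ p ∈ (univ : Finset ι).diag, M p.1 p.2
                + ∑ p ∈ (univ : Finset ι).offDiag, M p.1 p.2 := by
            rw [← Finset.sum_union (Finset.disjoint_diag_offDiag _),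
              Finset.diag_union_offDiag]
          have hdiagsum : ∑ p ∈ (univ : Finset ι).diag, M p.1 p.2 = ∑ k, M k k :=
            Finset.sum_diag _ _
          have hcomm : ∑ k, ∑ i, M i k = ∑ i, ∑ k, M i k := Finset.sum_comm
          omega
        have hgnn : 0 ≤ ∑ k, (g k : ℤ) := Finset.sum_nonneg fun k _ => Int.ofNat_nonneg _
        have hZ : ∑ k, (2 - 2 * (g k : ℤ) + M k k) - ∑ k, ∑ i, M i k ≤ 2 := by
          have hs1 : ∑ k, (2 - 2 * (g k : ℤ) + M k k)
              = 2 * (Fintype.card ι : ℤ) - 2 * ∑ k, (g k : ℤ) + ∑ k, M k k := by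
            rw [Finset.sum_add_distrib, Finset.sum_sub_distrib, ← Finset.mul_sum]
            simp [Finset.card_univ, mul_comm]
          omega
        calc ∑ k, (2 - 2 * (g k : ℝ) + (M k k : ℝ)) - ∑ k, ∑ i, (M i k : ℝ)
            = ((∑ k, (2 - 2 * (g k : ℤ) + M k k) - ∑ k, ∑ i, M i k : ℤ) : ℝ) := by
              push_cast; ring
          _ ≤ 2 := by exact_mod_cast hZ
      linarith [hstep1, hident, hA2, hterm, hfinal]
    · push_neg at hA
      obtain ⟨e, he1, he2⟩ := hA
      have hwe : M e e = -1 := by have := hdiag e; omega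
      have hge : g e = 0 := by omega
      by_cases hone : Fintype.card ι = 1
      · -- single vertex
        have huniv : ∀ x : ι, x = e := fun x =>
          (Fintype.card_le_one_iff.mp (le_of_eq hone)) x e
        have hus : (univ : Finset ι) = {e} := by
          ext x; simp [huniv x]
        have h2 := hc e
        rw [hus, sum_singleton, sum_singleton] at h2
        have h1 : ∑ k, c k = c e := by rw [hus, sum_singleton]
        rw [h1, h2, hwe, hge]
        push_cast
        linarith [ha e]
      · -- CASE B: contract the (-1)-vertex e
        have hcard2 : 2 ≤ Fintype.card ι := by
          have := Fintype.card_pos (α := ι); omega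
        have hcard' : Fintype.card {i : ι // i ≠ e} = Fintype.card ι - 1 := by
          have h := Fintype.card_subtype_compl (fun x : ι => x = e)
          rw [Fintype.card_subtype_eq] at h
          exact h
        haveI hne' : Nonempty {i : ι // i ≠ e} := by
          rw [← Fintype.card_pos_iff, hcard']; omega
        set M' : Matrix {i : ι // i ≠ e} {i : ι // i ≠ e} ℤ :=
          fun i k => M i.1 k.1 + M i.1 e * M e k.1 with hM'def
        set c' : {i : ι // i ≠ e} → ℝ :=
          fun k => c k.1 + ((M k.1 e * (M k.1 e - 1) : ℤ) : ℝ) + (M k.1 e : ℝ) * c e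
          with hc'def
        have hcard'' : Fintype.card {i : ι // i ≠ e} ≤ N := by omega
        have hsymm' : ∀ i k : {i : ι // i ≠ e}, M' i k = M' k i := by
          intro i k
          simp only [hM'def]
          rw [hsymm i.1 k.1, hsymm i.1 e, hsymm e k.1]
          ring
        have hoff' : ∀ i k : {i : ι // i ≠ e}, i ≠ k → 0 ≤ M' i k := by
          intro i k hik
          have h1 : i.1 ≠ k.1 := fun h => hik (Subtype.ext h)
          exact add_nonneg (hoff _ _ h1)
            (mul_nonneg (hoff _ _ i.2) (hoff _ _ (Ne.symm k.2)))
        have hdiag' : ∀ k : {i : ι // i ≠ e}, M' k k ≤ -1 := by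
          intro k
          set x : ι → ℝ := fun j => if j = k.1 then 1 else if j = e then (M k.1 e : ℝ) else 0
            with hxdef
          have hxk : x k.1 = 1 := by simp [hxdef]
          have hxe : x e = (M k.1 e : ℝ) := by
            simp only [hxdef]
            rw [if_neg (Ne.symm k.2)]
            simp
          have hx0 : ∀ j, j ≠ k.1 → j ≠ e → x j = 0 := by
            intro j h1 h2; simp [hxdef, h1, h2]
          have hxne : x ≠ 0 := by
            intro h
            have := congrFun h k.1
            rw [hxk] at this
            norm_num at this
          have hQ := hneg x hxne
          have hinner : ∀ i, ∑ j, x i * (M i j : ℝ) * x j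
              = x i * (M i k.1 : ℝ) * x k.1 + x i * (M i e : ℝ) * x e := by
            intro i
            refine Finset.sum_eq_add k.1 e k.2 ?_ ?_ ?_
            · intro j _ hj; rw [hx0 j hj.1 hj.2]; ring
            · intro hj; exact absurd (mem_univ _) hj
            · intro hj; exact absurd (mem_univ _) hj
          have houter : ∑ i, ∑ j, x i * (M i j : ℝ) * x j
              = (∑ j, x k.1 * (M k.1 j : ℝ) * x j) + ∑ j, x e * (M e j : ℝ) * x j := by
            refine Finset.sum_eq_add k.1 e k.2 ?_ ?_ ?_
            · intro i _ hi
              refine Finset.sum_eq_zero fun j _ => ?_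
              rw [hx0 i hi.1 hi.2]; ring
            · intro hj; exact absurd (mem_univ _) hj
            · intro hj; exact absurd (mem_univ _) hj
          rw [houter, hinner k.1, hinner e, hxk, hxe] at hQ
          have hsy : (M e k.1 : ℝ) = (M k.1 e : ℝ) := by rw [hsymm e k.1]
          have hwecast : (M e e : ℝ) = -1 := by rw [hwe]; norm_num
          rw [hsy, hwecast] at hQ
          have hcast : ((M' k k : ℤ) : ℝ) < 0 := by
            simp only [hM'def]
            push_cast
            rw [show (M e k.1 : ℝ) = (M k.1 e : ℝ) from hsy]
            nlinarith [hQ]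
          have : M' k k < 0 := by exact_mod_cast hcast
          omega
        have hneg' : ∀ v : {i : ι // i ≠ e} → ℝ, v ≠ 0 →
            ∑ i : {i : ι // i ≠ e}, ∑ k : {i : ι // i ≠ e},
              v i * (M' i k : ℝ) * v k < 0 := by
          intro v hv
          set s : ℝ := ∑ i : {i : ι // i ≠ e}, (M i.1 e : ℝ) * v i with hsdef
          set w : ι → ℝ := fun j => if h : j = e then s else v ⟨j, h⟩ with hwdef
          have hwe2 : w e = s := by simp [hwdef]
          have hwv : ∀ i : {i : ι // i ≠ e}, w i.1 = v i := by
            intro i; simp only [hwdef]; rw [dif_neg i.2]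
          have hwne : w ≠ 0 := by
            obtain ⟨j, hj⟩ := Function.ne_iff.mp hv
            refine Function.ne_iff.mpr ⟨j.1, ?_⟩
            rw [hwv j]; simpa using hj
          have hQ := hneg w hwne
          have hsy : ∀ i : {i : ι // i ≠ e}, (M e i.1 : ℝ) = (M i.1 e : ℝ) := by
            intro i; rw [hsymm e i.1]
          have hs2 : ∑ k : {i : ι // i ≠ e}, (M e k.1 : ℝ) * v k = s := by
            rw [hsdef]
            exact Finset.sum_congr rfl fun k _ => by rw [hsy k]
          have hs3 : ∑ i : {i : ι // i ≠ e}, v i * (M i.1 e : ℝ) = s := by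
            rw [hsdef]
            exact Finset.sum_congr rfl fun i _ => by ring
          have hinner : ∀ i, ∑ k, w i * (M i k : ℝ) * w k
              = w i * (M i e : ℝ) * s
                + ∑ k : {i : ι // i ≠ e}, w i * (M i k.1 : ℝ) * v k := by
            intro i
            rw [sum_split e (fun k => w i * (M i k : ℝ) * w k), hwe2]
            congr 1
            exact Finset.sum_congr rfl fun k _ => by rw [hwv k]
          have houter : ∑ i, ∑ k, w i * (M i k : ℝ) * w k
              = (∑ k, w e * (M e k : ℝ) * w k)
                + ∑ i : {i : ι // i ≠ e}, ∑ k, w i.1 * (M i.1 k : ℝ) * w k :=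
            sum_split e _
          have hfirst : ∑ k, w e * (M e k : ℝ) * w k = -(s * s) + s * s := by
            rw [hinner e, hwe2, hwe]
            push_cast
            have : ∑ k : {i : ι // i ≠ e}, s * (M e k.1 : ℝ) * v k
                = s * ∑ k : {i : ι // i ≠ e}, (M e k.1 : ℝ) * v k := by
              rw [Finset.mul_sum]
              exact Finset.sum_congr rfl fun k _ => by ring
            rw [this, hs2]
            ring
          have hsecond : ∑ i : {i : ι // i ≠ e}, ∑ k, w i.1 * (M i.1 k : ℝ) * w k
              = s * s + ∑ i : {i : ι // i ≠ e}, ∑ k : {i : ι // i ≠ e},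
                  v i * (M i.1 k.1 : ℝ) * v k := by
            have h1 : ∀ i : {i : ι // i ≠ e}, ∑ k, w i.1 * (M i.1 k : ℝ) * w k
                = v i * (M i.1 e : ℝ) * s
                  + ∑ k : {i : ι // i ≠ e}, v i * (M i.1 k.1 : ℝ) * v k := by
              intro i
              rw [hinner i.1, hwv i]
            rw [Finset.sum_congr rfl fun i _ => h1 i, Finset.sum_add_distrib]
            congr 1
            have : ∑ i : {i : ι // i ≠ e}, v i * (M i.1 e : ℝ) * s
                = (∑ i : {i : ι // i ≠ e}, v i * (M i.1 e : ℝ)) * s := by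
              rw [Finset.sum_mul]
            rw [this, hs3]
          have hexp : ∑ i : {i : ι // i ≠ e}, ∑ k : {i : ι // i ≠ e},
              v i * (M' i k : ℝ) * v k
              = (∑ i : {i : ι // i ≠ e}, ∑ k : {i : ι // i ≠ e},
                  v i * (M i.1 k.1 : ℝ) * v k) + s * s := by
            have hterm : ∀ i k : {i : ι // i ≠ e},
                v i * ((M' i k : ℤ) : ℝ) * v k
                = v i * (M i.1 k.1 : ℝ) * v k
                  + (v i * (M i.1 e : ℝ)) * ((M e k.1 : ℝ) * v k) := by
              intro i k
              simp only [hM'def]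
              push_cast
              ring
            have hrw : ∑ i : {i : ι // i ≠ e}, ∑ k : {i : ι // i ≠ e},
                v i * ((M' i k : ℤ) : ℝ) * v k
                = (∑ i : {i : ι // i ≠ e}, ∑ k : {i : ι // i ≠ e},
                    v i * (M i.1 k.1 : ℝ) * v k)
                  + ∑ i : {i : ι // i ≠ e}, ∑ k : {i : ι // i ≠ e},
                    (v i * (M i.1 e : ℝ)) * ((M e k.1 : ℝ) * v k) := by
              rw [← Finset.sum_add_distrib]
              refine Finset.sum_congr rfl fun i _ => ?_
              rw [← Finset.sum_add_distrib]
              exact Finset.sum_congr rfl fun k _ => hterm i k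
            rw [hrw, ← Finset.sum_mul_sum, hs3, hs2]
          rw [houter, hfirst, hsecond] at hQ
          rw [hexp]
          linarith
        have hcut' : ∀ S' : Finset {i : ι // i ≠ e}, S'.Nonempty → S' ≠ Finset.univ →
            ∃ i ∈ S', ∃ k, k ∉ S' ∧ 0 < M' i k := by
          intro S' hS'ne hS'u
          set S : Finset ι := S'.image Subtype.val with hSdef
          have heS : e ∉ S := by
            intro h
            obtain ⟨x, _, hx⟩ := Finset.mem_image.mp h
            exact x.2 hx
          have hSne : S.Nonempty := hS'ne.image _
          have hSu : S ≠ univ := fun h => heS (h ▸ mem_univ e)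
          obtain ⟨i, hiS, k, hkS, hMik⟩ := hcut S hSne hSu
          have hie : i ≠ e := fun h => heS (h ▸ hiS)
          obtain ⟨i', hi'S', hi'val⟩ := Finset.mem_image.mp hiS
          by_cases hke : k = e
          · have hMie : 0 < M i e := by rw [← hke]; exact hMik
            have hS2ne : (insert e S).Nonempty := ⟨e, mem_insert_self _ _⟩
            have hS2u : insert e S ≠ univ := by
              have hex : ∃ t' : {i : ι // i ≠ e}, t' ∉ S' := by
                by_contra hh; push_neg at hh
                exact hS'u (Finset.eq_univ_iff_forall.2 hh)
              obtain ⟨t', ht'⟩ := hex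
              intro h
              have hmem : t'.1 ∈ insert e S := h ▸ mem_univ _
              rcases mem_insert.mp hmem with h1 | h1
              · exact t'.2 h1
              · obtain ⟨u, huS', huv⟩ := Finset.mem_image.mp h1
                exact ht' (Subtype.ext huv ▸ huS')
            obtain ⟨i2, hi2, k2, hk2, hM2⟩ := hcut (insert e S) hS2ne hS2u
            have hk2e : k2 ≠ e := fun h => hk2 (h ▸ mem_insert_self e S)
            have hk2S : k2 ∉ S := fun h => hk2 (mem_insert_of_mem h)
            have hk2S' : (⟨k2, hk2e⟩ : {i : ι // i ≠ e}) ∉ S' :=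
              fun h => hk2S (Finset.mem_image.mpr ⟨_, h, rfl⟩)
            rcases mem_insert.mp hi2 with h2 | h2
            · have hMek2 : 0 < M e k2 := by rw [← h2]; exact hM2
              refine ⟨i', hi'S', ⟨k2, hk2e⟩, hk2S', ?_⟩
              simp only [hM'def]
              have hik2 : i'.1 ≠ k2 := by
                rw [hi'val]; intro h; exact hk2S (h ▸ hiS)
              have h0 : 0 ≤ M i'.1 k2 := hoff _ _ hik2
              have hp : 0 < M i'.1 e * M e k2 := by
                apply mul_pos _ hMek2
                rw [hi'val]; exact hMie
              linarith
            · obtain ⟨i2', hi2'S', hi2'v⟩ := Finset.mem_image.mp h2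
              refine ⟨i2', hi2'S', ⟨k2, hk2e⟩, hk2S', ?_⟩
              simp only [hM'def]
              have h1 : 0 < M i2'.1 k2 := by rw [hi2'v]; exact hM2
              have h2' : 0 ≤ M i2'.1 e * M e k2 :=
                mul_nonneg (hoff _ _ i2'.2) (hoff _ _ (Ne.symm hk2e))
              linarith
          · have hkS' : (⟨k, hke⟩ : {i : ι // i ≠ e}) ∉ S' :=
              fun h => hkS (Finset.mem_image.mpr ⟨_, h, rfl⟩)
            refine ⟨i', hi'S', ⟨k, hke⟩, hkS', ?_⟩
            simp only [hM'def]
            have h1 : 0 < M i'.1 k := by rw [hi'val]; exact hMik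
            have h2 : 0 ≤ M i'.1 e * M e k :=
              mul_nonneg (hoff _ _ i'.2) (hoff _ _ (Ne.symm hke))
            linarith
        have ha' : ∀ i : {i : ι // i ≠ e}, 0 ≤ a i.1 := fun i => ha i.1
        have hc0' : ∀ k : {i : ι // i ≠ e}, 0 ≤ c' k := by
          intro k
          simp only [hc'def]
          have h1 : (0:ℝ) ≤ ((M k.1 e * (M k.1 e - 1) : ℤ) : ℝ) := by
            exact_mod_cast int_mul_pred_nonneg (M k.1 e)
          have h2 : (0:ℝ) ≤ (M k.1 e : ℝ) * c e := by
            apply mul_nonneg _ (hc0 e)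
            exact_mod_cast hoff _ _ k.2
          linarith [hc0 k.1]
        have hc' : ∀ k : {i : ι // i ≠ e}, c' k
            = (∑ i : {i : ι // i ≠ e}, a i.1 * (M' i k : ℝ))
              - (2 * (g k.1 : ℝ) - 2 - (M' k k : ℝ))
              - ∑ i : {i : ι // i ≠ e}, (M' i k : ℝ) := by
          intro k
          have hs_a : ∑ i : {i : ι // i ≠ e}, a i.1 * ((M' i k : ℤ) : ℝ)
              = (∑ i : {i : ι // i ≠ e}, a i.1 * (M i.1 k.1 : ℝ))
                + (∑ i : {i : ι // i ≠ e}, a i.1 * (M i.1 e : ℝ)) * (M e k.1 : ℝ) := by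
            rw [Finset.sum_mul, ← Finset.sum_add_distrib]
            refine Finset.sum_congr rfl fun i _ => ?_
            simp only [hM'def]; push_cast; ring
          have hsplit_a1 : ∑ i : {i : ι // i ≠ e}, a i.1 * (M i.1 k.1 : ℝ)
              = (∑ i, a i * (M i k.1 : ℝ)) - a e * (M e k.1 : ℝ) := by
            rw [sum_split e (fun i => a i * (M i k.1 : ℝ))]; ring
          have hsplit_a2 : ∑ i : {i : ι // i ≠ e}, a i.1 * (M i.1 e : ℝ)
              = (∑ i, a i * (M i e : ℝ)) + a e := by
            rw [sum_split e (fun i => a i * (M i e : ℝ)), hwe]; push_cast; ring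
          have hs_m : ∑ i : {i : ι // i ≠ e}, ((M' i k : ℤ) : ℝ)
              = (∑ i : {i : ι // i ≠ e}, (M i.1 k.1 : ℝ))
                + (∑ i : {i : ι // i ≠ e}, (M i.1 e : ℝ)) * (M e k.1 : ℝ) := by
            rw [Finset.sum_mul, ← Finset.sum_add_distrib]
            refine Finset.sum_congr rfl fun i _ => ?_
            simp only [hM'def]; push_cast; ring
          have hsplit_m1 : ∑ i : {i : ι // i ≠ e}, (M i.1 k.1 : ℝ)
              = (∑ i, (M i k.1 : ℝ)) - (M e k.1 : ℝ) := by
            rw [sum_split e (fun i => ((M i k.1 : ℤ) : ℝ))]; ring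
          have hsplit_m2 : ∑ i : {i : ι // i ≠ e}, (M i.1 e : ℝ)
              = (∑ i, (M i e : ℝ)) + 1 := by
            rw [sum_split e (fun i => ((M i e : ℤ) : ℝ)), hwe]; push_cast; ring
          have hMkk' : ((M' k k : ℤ) : ℝ)
              = (M k.1 k.1 : ℝ) + (M k.1 e : ℝ) * (M e k.1 : ℝ) := by
            simp only [hM'def]; push_cast; ring
          have hce := hc e
          have hck := hc k.1
          rw [hge, hwe] at hce
          have hsy : (M k.1 e : ℝ) = (M e k.1 : ℝ) := by rw [hsymm k.1 e]
          simp only [hc'def]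
          rw [hs_a, hsplit_a1, hsplit_a2, hs_m, hsplit_m1, hsplit_m2, hMkk',
            hck, hce, hsy]
          push_cast
          rw [hsy]
          ring
        have hIH := IH M' (fun k => g k.1) (fun i => a i.1) c' hcard'' hsymm' hoff'
          hdiag' hneg' hcut' ha' hc' hc0'
        have hsplitc : ∑ k, c k = c e + ∑ k : {i : ι // i ≠ e}, c k.1 := sum_split e c
        have hm_nonneg : ∀ k : {i : ι // i ≠ e}, (0:ℝ) ≤ (M k.1 e : ℝ) := by
          intro k; exact_mod_cast hoff _ _ k.2
        have hr1 : (1:ℝ) ≤ ∑ k : {i : ι // i ≠ e}, (M k.1 e : ℝ) := by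
          obtain ⟨i, hiS, k0, hk0S, hM0⟩ := hcut {e} ⟨e, mem_singleton_self e⟩ (by
            intro h
            apply hone
            rw [← Finset.card_univ, ← h, Finset.card_singleton])
          have hie2 : i = e := mem_singleton.mp hiS
          have hk0e : k0 ≠ e := fun h => hk0S (h ▸ mem_singleton_self e)
          have hM0' : 0 < M e k0 := by rw [← hie2]; exact hM0
          have h1 : (1:ℝ) ≤ (M k0 e : ℝ) := by
            have : 1 ≤ M k0 e := by rw [hsymm]; omega
            exact_mod_cast this
          calc (1:ℝ) ≤ (M k0 e : ℝ) := h1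
            _ ≤ ∑ k : {i : ι // i ≠ e}, (M k.1 e : ℝ) :=
              Finset.single_le_sum (f := fun k : {i : ι // i ≠ e} => (M k.1 e : ℝ))
                (fun k _ => hm_nonneg k) (mem_univ (⟨k0, hk0e⟩ : {i : ι // i ≠ e}))
        have hmm0 : (0:ℝ) ≤ ∑ k : {i : ι // i ≠ e}, ((M k.1 e * (M k.1 e - 1) : ℤ) : ℝ) :=
          Finset.sum_nonneg fun k _ => by exact_mod_cast int_mul_pred_nonneg (M k.1 e)
        have hsumc' : ∑ k : {i : ι // i ≠ e}, c' k
            = ∑ k : {i : ι // i ≠ e}, c k.1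
              + ∑ k : {i : ι // i ≠ e}, ((M k.1 e * (M k.1 e - 1) : ℤ) : ℝ)
              + (∑ k : {i : ι // i ≠ e}, (M k.1 e : ℝ)) * c e := by
          simp only [hc'def]
          rw [Finset.sum_add_distrib, Finset.sum_add_distrib, Finset.sum_mul]
        have hprod2 : c e ≤ (∑ k : {i : ι // i ≠ e}, (M k.1 e : ℝ)) * c e := by
          nlinarith [hc0 e, hr1]
        rw [hsplitc]
        linarith [hIH, hmm0, hprod2, hsumc']
end key

end Aux

/-- **Local boundedness.** For a connected elliptic log canonical weighted
graph in which every external component is attached (`∑_i t_{ji} ≥ 1` for every `j`), the sum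
of the external coefficients satisfies `∑_j b_j ≤ 2`. -/
theorem local_boundedness (Γ : WGraph) (hconn : Γ.Connected) (hell : Γ.Elliptic)
    (a : Fin Γ.n → ℝ) (ha : Γ.IsDiscr a) (hlc : ∀ i, 0 ≤ a i)
    (hattached : ∀ j, 1 ≤ ∑ i, Γ.t j i) :
    ∑ j, Γ.b j ≤ 2 := by
  haveI : Nonempty (Fin Γ.n) := ⟨⟨0, Γ.npos⟩⟩
  set c : Fin Γ.n → ℝ := fun k => ((Γ.extc k : ℚ) : ℝ) with hcdef
  have hcut := conn_cut Γ.M Γ.symm hconn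
  have hc : ∀ k, c k = (∑ i, a i * (Γ.M i k : ℝ))
      - (2 * (Γ.g k : ℝ) - 2 - (Γ.M k k : ℝ)) - ∑ i, (Γ.M i k : ℝ) := by
    intro k
    have h := ha k
    simp only [hcdef]
    linarith
  have hextc0 : ∀ k, (0:ℚ) ≤ Γ.extc k := by
    intro k
    refine Finset.sum_nonneg fun j _ => ?_
    exact mul_nonneg (le_of_lt (Γ.b_pos j)) (by positivity)
  have hc0 : ∀ k, 0 ≤ c k := by
    intro k
    simp only [hcdef]
    exact_mod_cast hextc0 k
  have hkey := key (Fintype.card (Fin Γ.n)) Γ.M Γ.g a c le_rfl Γ.symm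
    Γ.offdiag_nonneg Γ.diag_le hell hcut hlc hc hc0
  have hsum : ((∑ k, Γ.extc k : ℚ) : ℝ) ≤ 2 := by
    push_cast at hkey ⊢
    convert hkey using 1
  have hQ : (∑ k, Γ.extc k : ℚ) ≤ 2 := by exact_mod_cast hsum
  have hbound : ∑ j, Γ.b j ≤ ∑ k, Γ.extc k := by
    have h1 : ∀ j, Γ.b j ≤ Γ.b j * ∑ i, (Γ.t j i : ℚ) := by
      intro j
      have ht : (1:ℚ) ≤ ∑ i, (Γ.t j i : ℚ) := by
        have := hattached j
        exact_mod_cast this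
      nlinarith [le_of_lt (Γ.b_pos j)]
    calc ∑ j, Γ.b j ≤ ∑ j, Γ.b j * ∑ i, (Γ.t j i : ℚ) :=
          Finset.sum_le_sum fun j _ => h1 j
      _ = ∑ k, Γ.extc k := by
          unfold WGraph.extc
          rw [Finset.sum_comm]
          exact Finset.sum_congr rfl fun j _ => by rw [Finset.mul_sum]
  linarith
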